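/- Let F : [r,T]² × C([0,T],ℝ^m) → ℝ^m be non-anticipative and product measurable with constants λ₀, c₀ ≥ 0 such that |F(u,t,x) − F(u,s,x)| ≤ λ₀ d_∞((t,x),(s,x)) and |F(t,s,x)| ≤ c₀(1 + ‖x‖_∞) for all r ≤ s < t < u ≤ T and x. Let (ₙY) be adapted continuous processes with, for some p ≥ 1 and c_{p,0} ≥ 0, E[‖ₙY‖_∞^p] + E[‖ₙY^s − ₙY^t‖_∞^p]/|s−t|^{p/2} ≤ c_{p,0}(1 + E[‖ₙY^r‖_∞^p]) for all n and s ≠ t in [r,T]. Then there is c_p > 0 such that, with γₙ(s) := Δsₙ/Δs̄ₙ (ratio of the current to the next partition increment) and s̲ₙ the predecessor of the partition point below s, E[ max_{j} | ∫_r^{t_{j,n}} F(t_{j,n}, s̲ₙ, ₙY)(γₙ(s) − 1) ds |^p ] ≤ c_p |𝕋ₙ|^{p/2} (1 + E[‖ₙY^r‖_∞^p]) for every n. -/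

import Mathlib

open MeasureTheory ProbabilityTheory Filter Set ENNReal

noncomputable section

abbrev Vec (m : ℕ) := EuclideanSpace ℝ (Fin m)
abbrev Mat (m d : ℕ) := EuclideanSpace ℝ (Fin m × Fin d)

def matVec {m d : ℕ} (A : Mat m d) (v : Vec d) : Vec m :=
  (EuclideanSpace.equiv (Fin m) ℝ).symm fun k => ∑ l, A (k, l) * v l

/-- Path stopped at time `s`. -/
def stopAt {E : Type*} (x : ℝ → E) (s : ℝ) : ℝ → E := fun u => x (min u s)

/-- Sup norm over `[0,T]`. -/
def supNorm {E : Type*} [NormedAddCommGroup E] (T : ℝ) (x : ℝ → E) : ℝ :=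
  ⨆ u : Icc (0:ℝ) T, ‖x u‖

def esupNorm {E : Type*} [NormedAddCommGroup E] (T : ℝ) (x : ℝ → E) : ℝ≥0∞ :=
  ⨆ u : Icc (0:ℝ) T, (‖x u‖₊ : ℝ≥0∞)

/-- The pseudometric `d_∞((t,x),(s,y)) = |t-s|^{1/2} + ‖x^t - y^s‖_∞`. -/
def dInfty {E : Type*} [NormedAddCommGroup E] (T t : ℝ) (x : ℝ → E) (s : ℝ) (y : ℝ → E) : ℝ :=
  |t - s| ^ (1/2 : ℝ) + supNorm T (fun u => stopAt x t u - stopAt y s u)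

/-- Delayed α-Hölder norm on `[0,T]` with Hölder seminorm over `[r,T]`. -/
def holderNorm {E : Type*} [NormedAddCommGroup E] (α r T : ℝ) (x : ℝ → E) : ℝ :=
  supNorm T (stopAt x r) +
    ⨆ p : {q : Icc r T × Icc r T // (q.1 : ℝ) ≠ (q.2 : ℝ)},
      ‖x p.1.1 - x p.1.2‖ / |(p.1.1 : ℝ) - (p.1.2 : ℝ)| ^ α

def eholderNorm {E : Type*} [NormedAddCommGroup E] (α r T : ℝ) (x : ℝ → E) : ℝ≥0∞ :=
  esupNorm T (stopAt x r) +
    ⨆ (s : Icc r T) (t : Icc r T) (_ : (s : ℝ) ≠ (t : ℝ)),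
      (‖x s - x t‖₊ : ℝ≥0∞) / ENNReal.ofReal (|(s : ℝ) - (t : ℝ)| ^ α)

/-- A sequence of partitions of `[r,T]`. -/
structure PartitionSeq (r T : ℝ) where
  k : ℕ → ℕ
  t : ℕ → ℕ → ℝ
  k_pos : ∀ n, 0 < k n
  left : ∀ n, t n 0 = r
  right : ∀ n, t n (k n) = T
  mono : ∀ n, ∀ i < k n, t n i < t n (i + 1)

def PartitionSeq.mesh {r T : ℝ} (P : PartitionSeq r T) (n : ℕ) : ℝ :=
  (Finset.range (P.k n)).sup' (Finset.nonempty_range_iff.mpr (P.k_pos n).ne')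
    (fun i => P.t n (i + 1) - P.t n i)

/-- Balanced sequence of partitions with constant `c`. -/
def PartitionSeq.Balanced {r T : ℝ} (P : PartitionSeq r T) (c : ℝ) : Prop :=
  ∀ n, ∀ i < P.k n, P.mesh n ≤ c * (P.t n (i + 1) - P.t n i)

open Classical in
/-- Greatest index `i ≤ kₙ` with `t_{i,n} < u`. -/
def PartitionSeq.idxLt {r T : ℝ} (P : PartitionSeq r T) (n : ℕ) (u : ℝ) : ℕ :=
  Nat.findGreatest (fun i => P.t n i < u) (P.k n)

open Classical in
/-- Greatest index `i ≤ kₙ - 1` with `t_{i,n} ≤ u`. -/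
def PartitionSeq.idxLe {r T : ℝ} (P : PartitionSeq r T) (n : ℕ) (u : ℝ) : ℕ :=
  Nat.findGreatest (fun i => P.t n i ≤ u) (P.k n - 1)

/-- `uₙ`, the partition point below `u`. -/
def PartitionSeq.below {r T : ℝ} (P : PartitionSeq r T) (n : ℕ) (u : ℝ) : ℝ :=
  P.t n (P.idxLe n u)

/-- `u̲ₙ`, the predecessor of the partition point below `u`. -/
def PartitionSeq.pred {r T : ℝ} (P : PartitionSeq r T) (n : ℕ) (u : ℝ) : ℝ :=
  P.t n (P.idxLe n u - 1)

/-- `γₙ(u) = Δuₙ / Δūₙ`. -/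
def PartitionSeq.gamma {r T : ℝ} (P : PartitionSeq r T) (n : ℕ) (u : ℝ) : ℝ :=
  (P.t n (P.idxLe n u) - P.t n (P.idxLe n u - 1)) /
    (P.t n (P.idxLe n u + 1) - P.t n (P.idxLe n u))

/-- Delayed piecewise-linear interpolation along the `n`-th partition. -/
def PartitionSeq.interp {r T : ℝ} (P : PartitionSeq r T) (n : ℕ) {E : Type*}
    [NormedAddCommGroup E] [NormedSpace ℝ E] (x : ℝ → E) (u : ℝ) : E :=
  if u ≤ P.t n 1 then x (min u r)
  else x (P.t n (P.idxLt n u - 1)) +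
    ((u - P.t n (P.idxLt n u)) / (P.t n (P.idxLt n u + 1) - P.t n (P.idxLt n u))) •
      (x (P.t n (P.idxLt n u)) - x (P.t n (P.idxLt n u - 1)))

/-- Piecewise-constant derivative of the delayed linear interpolation. -/
def PartitionSeq.interpDeriv {r T : ℝ} (P : PartitionSeq r T) (n : ℕ) {E : Type*}
    [NormedAddCommGroup E] [NormedSpace ℝ E] (x : ℝ → E) (u : ℝ) : E :=
  if u ≤ P.t n 1 then 0
  else (P.t n (P.idxLt n u + 1) - P.t n (P.idxLt n u))⁻¹ •
    (x (P.t n (P.idxLt n u)) - x (P.t n (P.idxLt n u - 1)))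

/-- Standard d-dimensional Brownian motion. -/
def IsBrownianMotion {Ω : Type*} [MeasurableSpace Ω] {d : ℕ}
    (μ : Measure Ω) (W : ℝ → Ω → Vec d) : Prop :=
  (∀ ω, Continuous fun u => W u ω) ∧ (∀ᵐ ω ∂μ, W 0 ω = 0) ∧
  (∀ (N : ℕ) (τ : ℕ → ℝ), Monotone τ → (∀ i, 0 ≤ τ i) →
    iIndepFun
      (fun p : Fin N × Fin d => fun ω => W (τ (p.1 + 1)) ω p.2 - W (τ p.1) ω p.2) μ) ∧
  (∀ s u : ℝ, 0 ≤ s → s ≤ u → ∀ l : Fin d,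
    Measure.map (fun ω => W u ω l - W s ω l) μ = gaussianReal 0 (Real.toNNReal (u - s)))

/-- Brownian motion with respect to a filtration. -/
def IsFilteredBM {Ω : Type*} [mΩ : MeasurableSpace Ω] {d : ℕ} (μ : Measure Ω)
    (F : Filtration ℝ mΩ) (W : ℝ → Ω → Vec d) : Prop :=
  IsBrownianMotion μ W ∧ Adapted F W ∧
  ∀ s u : ℝ, 0 ≤ s → s ≤ u →
    Indep (MeasurableSpace.comap (fun ω => W u ω - W s ω) inferInstance) (F s) μ

/-- Riemann sum for a stochastic integral. -/
def riemannSum {Ω : Type*} {m d : ℕ} (W : ℝ → Ω → Vec d) (X : ℝ → Ω → Mat m d)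
    (τ : ℕ → ℝ) (K : ℕ) (ω : Ω) : Vec m :=
  ∑ i ∈ Finset.range K, matVec (X (τ i) ω) (W (τ (i + 1)) ω - W (τ i) ω)

/-- `I` is the Itô integral `∫_a^b X dW`: left-point Riemann sums along any sequence of
partitions of `[a,b]` with vanishing mesh converge to `I` in measure (in probability). -/
def IsItoIntegral {Ω : Type*} [MeasurableSpace Ω] {m d : ℕ} (μ : Measure Ω)
    (W : ℝ → Ω → Vec d) (X : ℝ → Ω → Mat m d) (a b : ℝ) (I : Ω → Vec m) : Prop :=
  ∀ (τ : ℕ → ℕ → ℝ) (K : ℕ → ℕ),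
    (∀ n, 0 < K n ∧ τ n 0 = a ∧ τ n (K n) = b ∧ ∀ i < K n, τ n i < τ n (i + 1)) →
    Tendsto (fun n => ⨆ i : Fin (K n), (τ n (i + 1) - τ n i)) atTop (nhds 0) →
    TendstoInMeasure μ (fun n ω => riemannSum W X (τ n) (K n) ω) atTop I

/-- Vertical perturbation of a path at time `s`. -/
def vertShift {E : Type*} [Add E] (x : ℝ → E) (s : ℝ) (h : E) : ℝ → E :=
  fun u => if s ≤ u then x u + h else x u

/-- Vertical (Dupire) derivative of a non-anticipative functional. -/
def HasVertDerivAt {E F : Type*} [NormedAddCommGroup E] [NormedSpace ℝ E]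
    [NormedAddCommGroup F] [NormedSpace ℝ F]
    (G : ℝ → (ℝ → E) → F) (s : ℝ) (x : ℝ → E) (D : E →L[ℝ] F) : Prop :=
  HasFDerivAt (fun h : E => G s (vertShift x s h)) D 0

/-- Horizontal derivative of a non-anticipative functional. -/
def HasHorizDerivAt {E F : Type*} [NormedAddCommGroup E]
    [NormedAddCommGroup F] [NormedSpace ℝ F]
    (G : ℝ → (ℝ → E) → F) (s : ℝ) (x : ℝ → E) (D : F) : Prop :=
  HasDerivWithinAt (fun u => G u (stopAt x s)) D (Ici s) s

/-- Càdlàg path on `ℝ`. -/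
def Cadlag {E : Type*} [TopologicalSpace E] (x : ℝ → E) : Prop :=
  (∀ u, ContinuousWithinAt x (Ici u) u) ∧ ∀ u, ∃ L, Tendsto x (nhdsWithin u (Iio u)) (nhds L)

/-- `d_∞`-continuity of a functional on `[r,t₀) × D`. -/
def DInftyContinuous {E F : Type*} [NormedAddCommGroup E] [NormedAddCommGroup F]
    (r t₀ T : ℝ) (G : ℝ → (ℝ → E) → F) : Prop :=
  ∀ s ∈ Ico r t₀, ∀ x : ℝ → E, Cadlag x → ∀ ε > 0, ∃ δ > 0,
    ∀ u ∈ Ico r t₀, ∀ y : ℝ → E, Cadlag y → dInfty T u y s x < δ → ‖G u y - G s x‖ < ε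

/-- Bounded on bounded sets. -/
def BddOnBounded {E F : Type*} [NormedAddCommGroup E] [NormedAddCommGroup F]
    (r t₀ T : ℝ) (G : ℝ → (ℝ → E) → F) : Prop :=
  ∀ R > 0, ∃ C, ∀ s ∈ Ico r t₀, ∀ x : ℝ → E, Cadlag x → supNorm T x ≤ R → ‖G s x‖ ≤ C

/-- The correction term `ρ` built from the vertical derivative of `σ`. -/
def corrTerm {m d : ℕ} (σ : ℝ → ℝ → (ℝ → Vec m) → Mat m d)
    (σx : ℝ → ℝ → (ℝ → Vec m) → (Vec m →L[ℝ] Mat m d))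
    (t s : ℝ) (x : ℝ → Vec m) : Vec m :=
  if s < t then
    (EuclideanSpace.equiv (Fin m) ℝ).symm fun k =>
      ∑ l, (σx t s x ((EuclideanSpace.equiv (Fin m) ℝ).symm fun k' => σ s s x (k', l))) (k, l)
  else 0


/-- Delayed Sobolev norm `‖x‖_{1,p,r}` computed from a choice `x'` of weak derivative. -/
def sobNorm {E : Type*} [NormedAddCommGroup E] (p r T : ℝ) (x x' : ℝ → E) : ℝ :=
  supNorm T (stopAt x r) + (∫ s in Icc r T, ‖x' s‖ ^ p) ^ (1/p)

/-- Membership in the delayed Sobolev space `W_r^{1,p}([0,T],E)`, witnessed by the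
weak derivative `x'`. -/
def IsW1p {E : Type*} [NormedAddCommGroup E] [NormedSpace ℝ E] (p r T : ℝ)
    (x x' : ℝ → E) : Prop :=
  ContinuousOn x (Icc 0 T) ∧ IntervalIntegrable x' MeasureTheory.volume r T ∧
  (∀ t ∈ Icc r T, x t = x r + ∫ s in r..t, x' s) ∧
  MeasureTheory.IntegrableOn (fun s => ‖x' s‖ ^ p) (Icc r T) MeasureTheory.volume

/-- Solution of a path-dependent stochastic Volterra integral equation on `[r,T]` with
(possibly `ω`-dependent) drift `drift` and diffusion `Sig`; `S t` is the Itô integral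
`∫_r^t Sig(t,s,·) dW_s`. -/
def SolvesSVIE {m d : ℕ} {Ω : Type*} [MeasurableSpace Ω] (μ : Measure Ω)
    (W : ℝ → Ω → Vec d) (r T : ℝ)
    (drift : ℝ → ℝ → Ω → Vec m) (Sig : ℝ → ℝ → Ω → Mat m d)
    (Y : ℝ → Ω → Vec m) (S : ℝ → Ω → Vec m) : Prop :=
  (∀ ω, Continuous fun u => Y u ω) ∧
  (∀ t ∈ Icc r T, ∀ᵐ ω ∂μ, MeasureTheory.IntegrableOn (fun s => drift t s ω) (Ioc r t)) ∧
  (∀ t ∈ Icc r T, IsItoIntegral μ W (fun s => Sig t s) r t (S t)) ∧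
  (∀ t ∈ Icc r T, ∀ᵐ ω ∂μ, Y t ω = Y r ω + (∫ s in Ioc r t, drift t s ω) + S t ω)

/-- σ-algebra generated by `ξ` stopped at `r` up to time `t` and the increments of `W`
after time `r` up to time `t` (generating the filtration used for strong solutions). -/
def naturalSigma {m d : ℕ} {Ω : Type*} [MeasurableSpace Ω]
    (ξ : ℝ → Ω → Vec m) (W : ℝ → Ω → Vec d) (r t : ℝ) : MeasurableSpace Ω :=
  (⨆ s ∈ Icc (0:ℝ) t, MeasurableSpace.comap (fun ω => ξ (min s r) ω) inferInstance) ⊔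
  (⨆ s ∈ Icc r (max r t), MeasurableSpace.comap (fun ω => W s ω - W r ω) inferInstance)

/-- `x` solves the deterministic Volterra integral equation
`x(t) = x(r) + ∫_r^t (b - ρ/2)(t,s,x) ds + ∫_r^t σ(t,s,x) dh(s)` on `[r,T]` with initial
condition `x^r = x̂^r`, where `h` has weak derivative `h'`. -/
def SolvesSupportVIE {m d : ℕ} (r T : ℝ)
    (b : ℝ → ℝ → (ℝ → Vec m) → Vec m)
    (σ : ℝ → ℝ → (ℝ → Vec m) → Mat m d)
    (σx : ℝ → ℝ → (ℝ → Vec m) → (Vec m →L[ℝ] Mat m d))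
    (xhat : ℝ → Vec m) (h' : ℝ → Vec d) (x : ℝ → Vec m) : Prop :=
  ContinuousOn x (Icc 0 T) ∧ (∀ u ∈ Icc 0 r, x u = xhat u) ∧
  (∀ t ∈ Icc r T, MeasureTheory.IntegrableOn
    (fun s => b t s x - (1/2 : ℝ) • corrTerm σ σx t s x + matVec (σ t s x) (h' s)) (Ioc r t)) ∧
  (∀ t ∈ Icc r T, x t = x r +
    ∫ s in Ioc r t, (b t s x - (1/2 : ℝ) • corrTerm σ σx t s x + matVec (σ t s x) (h' s)))

/-- The extension `ρ̄` of the correction term to the closed triangle `s ≤ t`. -/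
def corrTermBar {m d : ℕ} (σ : ℝ → ℝ → (ℝ → Vec m) → Mat m d)
    (σx : ℝ → ℝ → (ℝ → Vec m) → (Vec m →L[ℝ] Mat m d))
    (t s : ℝ) (x : ℝ → Vec m) : Vec m :=
  if s ≤ t then
    (EuclideanSpace.equiv (Fin m) ℝ).symm fun k =>
      ∑ l, (σx t s x ((EuclideanSpace.equiv (Fin m) ℝ).symm fun k' => σ s s x (k', l))) (k, l)
  else 0

/-- The weak derivative `∂_t ρ̄` of the extended correction term in its first variable,
built from `∂_t ∂_x σ`. -/
def corrTermBarT {m d : ℕ} (σ : ℝ → ℝ → (ℝ → Vec m) → Mat m d)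
    (σxt : ℝ → ℝ → (ℝ → Vec m) → (Vec m →L[ℝ] Mat m d))
    (t s : ℝ) (x : ℝ → Vec m) : Vec m :=
  if s ≤ t then
    (EuclideanSpace.equiv (Fin m) ℝ).symm fun k =>
      ∑ l, (σxt t s x ((EuclideanSpace.equiv (Fin m) ℝ).symm fun k' => σ s s x (k', l))) (k, l)
  else 0

end

noncomputable section AuxGamma

namespace PartitionSeq

variable {r T : ℝ} (P : PartitionSeq r T) {n : ℕ}

lemma t_lt {i : ℕ} : ∀ {j : ℕ}, i < j → j ≤ P.k n → P.t n i < P.t n j := by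
  intro j
  induction j with
  | zero => omega
  | succ j ih =>
    intro hij hj
    rcases Nat.lt_succ_iff_lt_or_eq.mp hij with h | h
    · exact (ih h (by omega)).trans (P.mono n j (by omega))
    · rw [h]; exact P.mono n j (by omega)

lemma t_le {i j : ℕ} (hij : i ≤ j) (hj : j ≤ P.k n) : P.t n i ≤ P.t n j := by
  rcases eq_or_lt_of_le hij with h | h
  · rw [h]
  · exact (P.t_lt h hj).le

lemma t_mem {i : ℕ} (hi : i ≤ P.k n) : P.t n i ∈ Icc r T := by
  have h0 := P.left n
  have hk := P.right n
  have h1 := P.t_le (Nat.zero_le i) hi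
  have h2 := P.t_le hi (le_refl (P.k n))
  exact ⟨by linarith, by linarith⟩

lemma incr_le_mesh {i : ℕ} (hi : i < P.k n) : P.t n (i + 1) - P.t n i ≤ P.mesh n :=
  Finset.le_sup' (fun i => P.t n (i + 1) - P.t n i) (Finset.mem_range.mpr hi)

lemma mesh_pos : 0 < P.mesh n :=
  lt_of_lt_of_le (sub_pos.mpr (P.mono n 0 (P.k_pos n))) (P.incr_le_mesh (P.k_pos n))

lemma mesh_le (hrT : r ≤ T) : P.mesh n ≤ T - r := by
  apply Finset.sup'_le
  intro i hi
  rw [Finset.mem_range] at hi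
  have h0 := P.left n
  have hk := P.right n
  have h1 := P.t_le (Nat.zero_le i) (show i ≤ P.k n by omega)
  have h2 := P.t_le (show i + 1 ≤ P.k n by omega) (le_refl (P.k n))
  linarith

lemma idxLe_eq {i : ℕ} (hik : i + 1 ≤ P.k n) {s : ℝ}
    (h1 : P.t n i < s) (h2 : s < P.t n (i + 1)) : P.idxLe n s = i := by
  unfold idxLe
  rw [Nat.findGreatest_eq_iff]
  refine ⟨by omega, fun _ => h1.le, ?_⟩
  intro mm hm hm' hle
  exact absurd hle (not_le.mpr (lt_of_lt_of_le h2 (P.t_le (by omega) (by omega))))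

lemma sum_delta (j : ℕ) :
    ∑ i ∈ Finset.range j, (P.t n i - P.t n (i - 1)) = P.t n (j - 1) - P.t n 0 := by
  induction j with
  | zero => simp
  | succ j ih =>
    rw [Finset.sum_range_succ, ih, Nat.succ_sub_one]
    ring

end PartitionSeq

lemma abel_sum {V : Type*} [AddCommGroup V] [Module ℝ V] (Δ : ℕ → ℝ) (hΔ0 : Δ 0 = 0)
    (a : ℕ → V) (j : ℕ) :
    ∑ i ∈ Finset.range j, (Δ i - Δ (i + 1)) • a i
      = (∑ i ∈ Finset.range j, Δ i • (a i - a (i - 1))) - Δ j • a (j - 1) := by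
  induction j with
  | zero => simp [hΔ0]
  | succ j ih =>
    rw [Finset.sum_range_succ, ih, Finset.sum_range_succ, Nat.succ_sub_one]
    simp only [sub_smul, smul_sub]
    abel

lemma supNorm_le {E : Type*} [NormedAddCommGroup E] {T C : ℝ} (hT : 0 ≤ T) (f : ℝ → E)
    (h : ∀ u ∈ Icc (0:ℝ) T, ‖f u‖ ≤ C) : supNorm T f ≤ C := by
  have : Nonempty (Icc (0:ℝ) T) := ⟨⟨0, le_rfl, hT⟩⟩
  exact ciSup_le fun u => h u u.2

lemma supNorm_nonneg {E : Type*} [NormedAddCommGroup E] (T : ℝ) (f : ℝ → E) :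
    0 ≤ supNorm T f :=
  Real.iSup_nonneg fun u => norm_nonneg _

lemma esupNorm_zero {E : Type*} [NormedAddCommGroup E] (T : ℝ) :
    esupNorm T (fun _ : ℝ => (0 : E)) = 0 := by
  simp [esupNorm]

lemma ofReal_supNorm_le_esupNorm {E : Type*} [NormedAddCommGroup E] {T : ℝ} (hT : 0 ≤ T)
    {f : ℝ → E} (hf : Continuous f) :
    ENNReal.ofReal (supNorm T f) ≤ esupNorm T f := by
  obtain ⟨u₀, hu₀, hmax⟩ := isCompact_Icc.exists_isMaxOn (nonempty_Icc.mpr hT)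
    (continuous_norm.comp hf).continuousOn
  calc ENNReal.ofReal (supNorm T f) ≤ ENNReal.ofReal ‖f u₀‖ :=
        ENNReal.ofReal_le_ofReal (supNorm_le hT f fun u hu => hmax hu)
    _ = (‖f u₀‖₊ : ℝ≥0∞) := ofReal_norm _
    _ ≤ esupNorm T f := le_iSup (fun u : Icc (0:ℝ) T => (‖f u‖₊ : ℝ≥0∞)) ⟨u₀, hu₀⟩

end AuxGamma


section Aux2
open MeasureTheory Set ENNReal

variable {Ω : Type*} [MeasurableSpace Ω] {μ : MeasureTheory.Measure Ω}

lemma measurable_esupNorm {m : ℕ} {T : ℝ} (hT : 0 ≤ T) {f : Ω → ℝ → Vec m}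
    (hfc : ∀ ω, Continuous (f ω)) (hfm : ∀ u, Measurable fun ω => f ω u) :
    Measurable fun ω => esupNorm T (f ω) := by
  have hne : Nonempty (Icc (0:ℝ) T) := ⟨⟨0, le_rfl, hT⟩⟩
  obtain ⟨D, hD⟩ := TopologicalSpace.exists_dense_seq (Icc (0:ℝ) T)
  have key : ∀ ω, esupNorm T (f ω) = ⨆ i : ℕ, (‖f ω (D i)‖₊ : ℝ≥0∞) := by
    intro ω
    apply le_antisymm
    · refine iSup_le fun u => ?_
      have hu : u ∈ closure (Set.range D) := by
        rw [hD.closure_range]; trivial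
      obtain ⟨v, hv, hvu⟩ := mem_closure_iff_seq_limit.mp hu
      have h1 : Filter.Tendsto (fun k => ((v k : ℝ))) Filter.atTop (nhds (u : ℝ)) :=
        (continuous_subtype_val.tendsto u).comp hvu
      have h2 : Filter.Tendsto (fun k => (‖f ω (v k)‖₊ : ℝ≥0∞)) Filter.atTop
          (nhds (‖f ω (u : ℝ)‖₊ : ℝ≥0∞)) := by
        exact (ENNReal.continuous_coe.tendsto _).comp
          ((continuous_nnnorm.tendsto _).comp (((hfc ω).tendsto _).comp h1))
      refine le_of_tendsto h2 (Filter.Eventually.of_forall fun k => ?_)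
      obtain ⟨nk, hnk⟩ := hv k
      rw [← hnk]
      exact le_iSup (fun i : ℕ => (‖f ω (D i)‖₊ : ℝ≥0∞)) nk
    · exact iSup_le fun i => le_iSup (fun u : Icc (0:ℝ) T => (‖f ω u‖₊ : ℝ≥0∞)) (D i)
  simp only [key]
  exact Measurable.iSup fun i => ((hfm (D i)).nnnorm).coe_nnreal_ennreal

lemma lintegral_Lp_sum_le {ι : Type*} (s : Finset ι) (f : ι → Ω → ℝ≥0∞)
    (hf : ∀ i ∈ s, Measurable (f i)) {p : ℝ} (hp : 1 ≤ p) :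
    (∫⁻ ω, (∑ i ∈ s, f i ω) ^ p ∂μ) ^ (1 / p) ≤ ∑ i ∈ s, (∫⁻ ω, f i ω ^ p ∂μ) ^ (1 / p) := by
  classical
  induction s using Finset.induction_on with
  | empty =>
    have hp0 : (0:ℝ) < p := lt_of_lt_of_le zero_lt_one hp
    simp only [Finset.sum_empty, ENNReal.zero_rpow_of_pos hp0,
      ENNReal.zero_rpow_of_pos (show (0:ℝ) < 1 / p by positivity), MeasureTheory.lintegral_zero, le_refl]
  | insert _ _ hni ih =>
    rename_i a s'
    simp only [Finset.sum_insert hni]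
    have hmeas : Measurable fun ω => ∑ i ∈ s', f i ω :=
      Finset.measurable_sum s' fun i hi => hf i (Finset.mem_insert_of_mem hi)
    calc (∫⁻ ω, (f a ω + ∑ i ∈ s', f i ω) ^ p ∂μ) ^ (1 / p)
        ≤ (∫⁻ ω, f a ω ^ p ∂μ) ^ (1 / p) + (∫⁻ ω, (∑ i ∈ s', f i ω) ^ p ∂μ) ^ (1 / p) :=
          ENNReal.lintegral_Lp_add_le (hf a (Finset.mem_insert_self a s')).aemeasurable
            hmeas.aemeasurable hp
      _ ≤ _ := add_le_add_right (ih fun i hi => hf i (Finset.mem_insert_of_mem hi)) _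

lemma lintegral_Lp_const_mul (c : ℝ≥0∞) {f : Ω → ℝ≥0∞} (hf : Measurable f) {p : ℝ}
    (hp : 1 ≤ p) :
    (∫⁻ ω, (c * f ω) ^ p ∂μ) ^ (1 / p) = c * (∫⁻ ω, f ω ^ p ∂μ) ^ (1 / p) := by
  have hp0 : (0:ℝ) ≤ p := le_trans zero_le_one hp
  have hpne : p ≠ 0 := by positivity
  simp_rw [ENNReal.mul_rpow_of_nonneg _ _ hp0]
  rw [lintegral_const_mul _ (hf.pow_const p)]
  rw [ENNReal.mul_rpow_of_nonneg _ _ (by positivity : (0:ℝ) ≤ 1 / p),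
    ← ENNReal.rpow_mul, mul_one_div, div_self hpne, ENNReal.rpow_one]

lemma lintegral_Lp_const [IsProbabilityMeasure μ] (c : ℝ≥0∞) {p : ℝ} (hp : 1 ≤ p) :
    (∫⁻ _ω, c ^ p ∂μ) ^ (1 / p) = c := by
  have hpne : p ≠ 0 := by positivity
  rw [lintegral_const, measure_univ, mul_one, ← ENNReal.rpow_mul, mul_one_div,
    div_self hpne, ENNReal.rpow_one]

end Aux2


section Aux3
open MeasureTheory Set

variable {r T : ℝ} {m : ℕ}

lemma integral_piece (P : PartitionSeq r T) {n : ℕ} (w : ℝ)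
    (G : ℝ → ℝ → (ℝ → Vec m) → Vec m) (x : ℝ → Vec m) {i : ℕ} (hi : i < P.k n) :
    IntegrableOn (fun s => (P.gamma n s - 1) • G w (P.pred n s) x)
      (Ioc (P.t n i) (P.t n (i+1))) volume ∧
    (∫ s in Ioc (P.t n i) (P.t n (i+1)), (P.gamma n s - 1) • G w (P.pred n s) x)
      = ((P.t n i - P.t n (i-1)) - (P.t n (i+1) - P.t n i)) • G w (P.t n (i-1)) x := by
  set c : Vec m := G w (P.t n (i-1)) x with hc
  have hΔpos : 0 < P.t n (i+1) - P.t n i := sub_pos.mpr (P.mono n i hi)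
  have heq : EqOn (fun s => (P.gamma n s - 1) • G w (P.pred n s) x)
      (fun _ => ((P.t n i - P.t n (i-1)) / (P.t n (i+1) - P.t n i) - 1) • c)
      (Ioo (P.t n i) (P.t n (i+1))) := by
    intro s hs
    have hidx : P.idxLe n s = i := P.idxLe_eq (by omega) hs.1 hs.2
    simp only [PartitionSeq.gamma, PartitionSeq.pred, hidx, hc]
  constructor
  · rw [integrableOn_Ioc_iff_integrableOn_Ioo]
    exact (integrableOn_const measure_Ioo_lt_top.ne).congr_fun
      heq.symm measurableSet_Ioo
  · rw [integral_Ioc_eq_integral_Ioo, setIntegral_congr_fun measurableSet_Ioo heq,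
      setIntegral_const, Real.volume_real_Ioo_of_le (P.mono n i hi).le, smul_smul]
    congr 1
    field_simp

lemma integral_eq_sum (P : PartitionSeq r T) {n : ℕ} (w : ℝ)
    (G : ℝ → ℝ → (ℝ → Vec m) → Vec m) (x : ℝ → Vec m) :
    ∀ j, j ≤ P.k n →
    (∫ s in Ioc (P.t n 0) (P.t n j), (P.gamma n s - 1) • G w (P.pred n s) x)
      = ∑ i ∈ Finset.range j,
          ((P.t n i - P.t n (i-1)) - (P.t n (i+1) - P.t n i)) • G w (P.t n (i-1)) x := by
  have main : ∀ j, j ≤ P.k n →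
      IntegrableOn (fun s => (P.gamma n s - 1) • G w (P.pred n s) x)
        (Ioc (P.t n 0) (P.t n j)) volume ∧
      (∫ s in Ioc (P.t n 0) (P.t n j), (P.gamma n s - 1) • G w (P.pred n s) x)
        = ∑ i ∈ Finset.range j,
            ((P.t n i - P.t n (i-1)) - (P.t n (i+1) - P.t n i)) • G w (P.t n (i-1)) x := by
    intro j
    induction j with
    | zero =>
      intro _
      simp [Set.Ioc_self]
    | succ j ih =>
      intro hj
      obtain ⟨ih1, ih2⟩ := ih (by omega)
      obtain ⟨hp1, hp2⟩ := integral_piece P w G x (show j < P.k n by omega)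
      have hu : Ioc (P.t n 0) (P.t n j) ∪ Ioc (P.t n j) (P.t n (j+1))
          = Ioc (P.t n 0) (P.t n (j+1)) :=
        Set.Ioc_union_Ioc_eq_Ioc (P.t_le (Nat.zero_le j) (by omega))
          (P.t_le (by omega) hj)
      refine ⟨?_, ?_⟩
      · rw [← hu]; exact ih1.union hp1
      · rw [← hu, setIntegral_union (Set.Ioc_disjoint_Ioc_of_le le_rfl) measurableSet_Ioc ih1 hp1,
          ih2, hp2, Finset.sum_range_succ]
  exact fun j hj => (main j hj).2

end Aux3


section Aux4
open MeasureTheory Set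

lemma pathwise_bound {m : ℕ} {r T : ℝ} (hr : 0 ≤ r) (hrT : r < T)
    (P : PartitionSeq r T) {n : ℕ}
    (G : ℝ → ℝ → (ℝ → Vec m) → Vec m) (lam₀ c₀ : ℝ) (hlam₀ : 0 ≤ lam₀) (hc₀ : 0 ≤ c₀)
    (hlip : ∀ s t u : ℝ, r ≤ s → s < t → t < u → u ≤ T → ∀ x : ℝ → Vec m, Continuous x →
      ‖G u t x - G u s x‖ ≤ lam₀ * dInfty T t x s x)
    (hgrow : ∀ t s : ℝ, r ≤ s → s ≤ t → t ≤ T → ∀ x : ℝ → Vec m, Continuous x →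
      ‖G t s x‖ ≤ c₀ * (1 + supNorm T x))
    (x : ℝ → Vec m) (hx : Continuous x) (j : ℕ) (hj : j ≤ P.k n) :
    ‖∫ s in Ioc r (P.t n j), (P.gamma n s - 1) • G (P.t n j) (P.pred n s) x‖
      ≤ lam₀ * (T - r) * (P.mesh n) ^ ((1:ℝ)/2)
        + lam₀ * ∑ i ∈ Finset.range (P.k n + 1), (P.t n i - P.t n (i-1)) *
            supNorm T (fun u => stopAt x (P.t n (i-1)) u - stopAt x (P.t n (i-1-1)) u)
        + (P.mesh n) ^ ((1:ℝ)/2) * (T - r) ^ ((1:ℝ)/2) * c₀ * (1 + supNorm T x) := by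
  set k := P.k n with hk
  set msh := P.mesh n with hmsh
  have hT0 : (0:ℝ) ≤ T := le_trans hr hrT.le
  have hTr : (0:ℝ) < T - r := sub_pos.mpr hrT
  have hmesh0 : 0 < msh := P.mesh_pos
  have hm2 : (0:ℝ) ≤ msh ^ ((1:ℝ)/2) := Real.rpow_nonneg hmesh0.le _
  have hΔ : ∀ i, i ≤ k → 0 ≤ P.t n i - P.t n (i-1) :=
    fun i hi => sub_nonneg.mpr (P.t_le (by omega) hi)
  have hD0 : ∀ i, (0:ℝ) ≤ supNorm T
      (fun u => stopAt x (P.t n (i-1)) u - stopAt x (P.t n (i-1-1)) u) :=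
    fun i => supNorm_nonneg _ _
  have hSN : (0:ℝ) ≤ supNorm T x := supNorm_nonneg _ _
  -- rewrite the integral as a sum
  have hIoc : Ioc r (P.t n j) = Ioc (P.t n 0) (P.t n j) := by rw [P.left n]
  rw [hIoc, integral_eq_sum P (P.t n j) G x j hj]
  -- Abel summation
  have habel := abel_sum (fun i => P.t n i - P.t n (i-1)) (by simp)
    (fun i => G (P.t n j) (P.t n (i-1)) x) j
  simp only [Nat.add_sub_cancel] at habel
  rw [habel]
  -- term bound
  have hterm : ∀ i ∈ Finset.range j,
      ‖(P.t n i - P.t n (i-1)) • (G (P.t n j) (P.t n (i-1)) x - G (P.t n j) (P.t n (i-1-1)) x)‖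
        ≤ (P.t n i - P.t n (i-1)) * (lam₀ * (msh ^ ((1:ℝ)/2) +
            supNorm T (fun u => stopAt x (P.t n (i-1)) u - stopAt x (P.t n (i-1-1)) u))) := by
    intro i hi
    rw [Finset.mem_range] at hi
    have hik : i ≤ k := by omega
    rw [norm_smul, Real.norm_eq_abs, abs_of_nonneg (hΔ i hik)]
    apply mul_le_mul_of_nonneg_left _ (hΔ i hik)
    rcases Nat.lt_or_ge i 2 with h2 | h2
    · -- i = 0 or 1 : difference vanishes
      interval_cases i <;>
        simp only [Nat.zero_sub, Nat.sub_self] <;>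
        · rw [sub_self, norm_zero]
          exact mul_nonneg hlam₀ (add_nonneg hm2 (supNorm_nonneg _ _))
    · -- i ≥ 2
      have h1 : r ≤ P.t n (i-1-1) := (P.t_mem (n := n) (by omega)).1
      have h2' : P.t n (i-1-1) < P.t n (i-1) := P.t_lt (by omega) (by omega)
      have h3 : P.t n (i-1) < P.t n j := P.t_lt (by omega) hj
      have h4 : P.t n j ≤ T := (P.t_mem hj).2
      refine le_trans (hlip _ _ _ h1 h2' h3 h4 x hx) ?_
      unfold dInfty
      rw [mul_add, mul_add]
      apply add_le_add_left
      apply mul_le_mul_of_nonneg_left _ hlam₀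
      have habs : |P.t n (i-1) - P.t n (i-1-1)| ≤ msh := by
        rw [abs_of_nonneg (sub_nonneg.mpr (P.t_le (by omega) (by omega)))]
        have := P.incr_le_mesh (n := n) (i := i-1-1) (by omega)
        have heq : i - 1 - 1 + 1 = i - 1 := by omega
        rw [heq] at this
        exact this
      exact Real.rpow_le_rpow (abs_nonneg _) habs (by norm_num)
  -- boundary bound
  have hbdry : ‖(P.t n j - P.t n (j-1)) • G (P.t n j) (P.t n (j-1-1)) x‖
      ≤ msh ^ ((1:ℝ)/2) * (T - r) ^ ((1:ℝ)/2) * c₀ * (1 + supNorm T x) := by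
    rw [norm_smul, Real.norm_eq_abs, abs_of_nonneg (hΔ j hj)]
    have hΔm : P.t n j - P.t n (j-1) ≤ msh := by
      rcases Nat.eq_zero_or_pos j with h | h
      · subst h; simp [hmesh0.le]
      · have := P.incr_le_mesh (n := n) (i := j-1) (by omega)
        have heq : j - 1 + 1 = j := by omega
        rw [heq] at this
        exact this
    have hmsplit : msh ≤ msh ^ ((1:ℝ)/2) * (T - r) ^ ((1:ℝ)/2) := by
      have h1 : msh = msh ^ ((1:ℝ)/2) * msh ^ ((1:ℝ)/2) := by
        rw [← Real.rpow_add hmesh0]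
        norm_num
      nth_rewrite 1 [h1]
      apply mul_le_mul_of_nonneg_left _ hm2
      exact Real.rpow_le_rpow hmesh0.le (P.mesh_le hrT.le) (by norm_num)
    have hg : ‖G (P.t n j) (P.t n (j-1-1)) x‖ ≤ c₀ * (1 + supNorm T x) :=
      hgrow _ _ (P.t_mem (n := n) (by omega)).1 (P.t_le (by omega) hj) (P.t_mem hj).2 x hx
    calc (P.t n j - P.t n (j-1)) * ‖G (P.t n j) (P.t n (j-1-1)) x‖
        ≤ msh * (c₀ * (1 + supNorm T x)) :=
          mul_le_mul hΔm hg (norm_nonneg _) hmesh0.le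
      _ ≤ (msh ^ ((1:ℝ)/2) * (T - r) ^ ((1:ℝ)/2)) * (c₀ * (1 + supNorm T x)) :=
          mul_le_mul_of_nonneg_right hmsplit (by positivity)
      _ = msh ^ ((1:ℝ)/2) * (T - r) ^ ((1:ℝ)/2) * c₀ * (1 + supNorm T x) := by ring
  -- sum bounds
  have hsum1 : ∑ i ∈ Finset.range j, (P.t n i - P.t n (i-1)) ≤ T - r := by
    rw [P.sum_delta j, P.left n]
    have := (P.t_mem (n := n) (i := j - 1) (by omega)).2
    linarith
  have hsum2 : ∑ i ∈ Finset.range j, (P.t n i - P.t n (i-1)) *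
        supNorm T (fun u => stopAt x (P.t n (i-1)) u - stopAt x (P.t n (i-1-1)) u)
      ≤ ∑ i ∈ Finset.range (k + 1), (P.t n i - P.t n (i-1)) *
        supNorm T (fun u => stopAt x (P.t n (i-1)) u - stopAt x (P.t n (i-1-1)) u) := by
    apply Finset.sum_le_sum_of_subset_of_nonneg
    · exact Finset.range_subset_range.mpr (by omega)
    · intro i hi _
      rw [Finset.mem_range] at hi
      exact mul_nonneg (hΔ i (by omega)) (hD0 i)
  calc ‖(∑ i ∈ Finset.range j, (P.t n i - P.t n (i-1)) •
          (G (P.t n j) (P.t n (i-1)) x - G (P.t n j) (P.t n (i-1-1)) x))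
        - (P.t n j - P.t n (j-1)) • G (P.t n j) (P.t n (j-1-1)) x‖
      ≤ (∑ i ∈ Finset.range j, ‖(P.t n i - P.t n (i-1)) •
          (G (P.t n j) (P.t n (i-1)) x - G (P.t n j) (P.t n (i-1-1)) x)‖)
        + ‖(P.t n j - P.t n (j-1)) • G (P.t n j) (P.t n (j-1-1)) x‖ :=
        le_trans (norm_sub_le _ _) (add_le_add_left (norm_sum_le _ _) _)
    _ ≤ (∑ i ∈ Finset.range j, (P.t n i - P.t n (i-1)) * (lam₀ * (msh ^ ((1:ℝ)/2) +
            supNorm T (fun u => stopAt x (P.t n (i-1)) u - stopAt x (P.t n (i-1-1)) u))))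
        + msh ^ ((1:ℝ)/2) * (T - r) ^ ((1:ℝ)/2) * c₀ * (1 + supNorm T x) :=
        add_le_add (Finset.sum_le_sum hterm) hbdry
    _ ≤ _ := by
        have hexp : ∑ i ∈ Finset.range j, (P.t n i - P.t n (i-1)) * (lam₀ * (msh ^ ((1:ℝ)/2) +
              supNorm T (fun u => stopAt x (P.t n (i-1)) u - stopAt x (P.t n (i-1-1)) u)))
            = lam₀ * msh ^ ((1:ℝ)/2) * (∑ i ∈ Finset.range j, (P.t n i - P.t n (i-1)))
              + lam₀ * ∑ i ∈ Finset.range j, (P.t n i - P.t n (i-1)) *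
                supNorm T (fun u => stopAt x (P.t n (i-1)) u - stopAt x (P.t n (i-1-1)) u) := by
          rw [Finset.mul_sum, Finset.mul_sum, ← Finset.sum_add_distrib]
          apply Finset.sum_congr rfl
          intros; ring
        rw [hexp]
        have e1 : lam₀ * msh ^ ((1:ℝ)/2) * (∑ i ∈ Finset.range j, (P.t n i - P.t n (i-1)))
            ≤ lam₀ * (T - r) * msh ^ ((1:ℝ)/2) := by
          have := mul_le_mul_of_nonneg_left hsum1 (mul_nonneg hlam₀ hm2)
          calc lam₀ * msh ^ ((1:ℝ)/2) * (∑ i ∈ Finset.range j, (P.t n i - P.t n (i-1)))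
              ≤ lam₀ * msh ^ ((1:ℝ)/2) * (T - r) := this
            _ = lam₀ * (T - r) * msh ^ ((1:ℝ)/2) := by ring
        have e2 := mul_le_mul_of_nonneg_left hsum2 hlam₀
        linarith
end Aux4


/-- estimate for Volterra integrals weighted by `γₙ(s) - 1` (Lemma on the
second auxiliary remainder). -/
theorem gamma_weighted_integral_estimate {m : ℕ} {Ω : Type*} [mΩ : MeasurableSpace Ω]
    (μ : Measure Ω) [IsProbabilityMeasure μ] (F : Filtration ℝ mΩ)
    (r T : ℝ) (hr : 0 ≤ r) (hrT : r < T)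
    (P : PartitionSeq r T) (cT : ℝ) (hcT : 1 ≤ cT) (hbal : P.Balanced cT)
    (G : ℝ → ℝ → (ℝ → Vec m) → Vec m)
    (hna : ∀ t s : ℝ, r ≤ s → s ≤ t → t ≤ T → ∀ x : ℝ → Vec m, Continuous x →
      G t s x = G t s (stopAt x s))
    (lam₀ c₀ : ℝ) (hlam₀ : 0 ≤ lam₀) (hc₀ : 0 ≤ c₀)
    (hlip : ∀ s t u : ℝ, r ≤ s → s < t → t < u → u ≤ T → ∀ x : ℝ → Vec m, Continuous x →
      ‖G u t x - G u s x‖ ≤ lam₀ * dInfty T t x s x)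
    (hgrow : ∀ t s : ℝ, r ≤ s → s ≤ t → t ≤ T → ∀ x : ℝ → Vec m, Continuous x →
      ‖G t s x‖ ≤ c₀ * (1 + supNorm T x))
    (p cp₀ : ℝ) (hp : 1 ≤ p) (hcp₀ : 0 ≤ cp₀)
    (Y : ℕ → ℝ → Ω → Vec m)
    (hYc : ∀ n ω, Continuous fun u => Y n u ω)
    (hYad : ∀ n, Adapted F fun u => Y n u)
    (hmom : ∀ n, ∀ s ∈ Icc r T, ∀ t ∈ Icc r T, s ≠ t →
      (∫⁻ ω, (esupNorm T fun u => Y n u ω) ^ p ∂μ)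
        + (∫⁻ ω, (esupNorm T fun u =>
              stopAt (fun v => Y n v ω) s u - stopAt (fun v => Y n v ω) t u) ^ p ∂μ)
          / ENNReal.ofReal (|s - t| ^ (p / 2))
      ≤ ENNReal.ofReal cp₀
          * (1 + ∫⁻ ω, (esupNorm T (stopAt (fun v => Y n v ω) r)) ^ p ∂μ)) :
    ∃ cp > (0:ℝ), ∀ n,
      ∫⁻ ω, (⨆ j : Fin (P.k n + 1),
        (‖∫ s in Ioc r (P.t n j),
            (P.gamma n s - 1) • G (P.t n j) (P.pred n s) (fun v => Y n v ω)‖₊ : ℝ≥0∞) ^ p) ∂μ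
      ≤ ENNReal.ofReal cp * ENNReal.ofReal (P.mesh n ^ (p / 2))
          * (1 + ∫⁻ ω, (esupNorm T (stopAt (fun v => Y n v ω) r)) ^ p ∂μ) := by
  classical
  have hT0 : (0:ℝ) ≤ T := le_trans hr hrT.le
  have hppos : (0:ℝ) < p := lt_of_lt_of_le zero_lt_one hp
  have hp0 : (0:ℝ) ≤ p := hppos.le
  have hpne : p ≠ 0 := hppos.ne'
  have hTr : (0:ℝ) < T - r := sub_pos.mpr hrT
  set cq : ℝ := cp₀ ^ ((1:ℝ)/p) with hcq
  have hcq0 : 0 ≤ cq := Real.rpow_nonneg hcp₀ _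
  set base : ℝ := lam₀ * (T - r) + lam₀ * (T - r) * cq
      + (T - r) ^ ((1:ℝ)/2) * c₀ * (1 + cq) + 1 with hbase
  have hb1 : 0 ≤ lam₀ * (T - r) := mul_nonneg hlam₀ hTr.le
  have hb2 : 0 ≤ lam₀ * (T - r) * cq := mul_nonneg hb1 hcq0
  have hb3 : 0 ≤ (T - r) ^ ((1:ℝ)/2) * c₀ * (1 + cq) :=
    mul_nonneg (mul_nonneg (Real.rpow_nonneg hTr.le _) hc₀) (by linarith)
  have hbase1 : (1:ℝ) ≤ base := by rw [hbase]; linarith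
  have hbase0 : (0:ℝ) ≤ base := by linarith
  refine ⟨base ^ p, Real.rpow_pos_of_pos (by linarith) p, fun n => ?_⟩
  set k := P.k n with hkdef
  have hk1 : 1 ≤ k := P.k_pos n
  set msh := P.mesh n with hmshdef
  have hmesh0 : 0 < msh := P.mesh_pos
  set m2 : ℝ := msh ^ ((1:ℝ)/2) with hm2def
  have hm20 : 0 ≤ m2 := Real.rpow_nonneg hmesh0.le _
  set E₀ := ∫⁻ ω, (esupNorm T (stopAt (fun v => Y n v ω) r)) ^ p ∂μ with hE₀
  set M := (1 + E₀) ^ ((1:ℝ)/p) with hM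
  have hM1 : (1:ℝ≥0∞) ≤ M :=
    calc (1:ℝ≥0∞) = (1:ℝ≥0∞) ^ ((1:ℝ)/p) := (ENNReal.one_rpow _).symm
      _ ≤ (1 + E₀) ^ ((1:ℝ)/p) := ENNReal.rpow_le_rpow le_self_add (by positivity)
  set cqE := ENNReal.ofReal cq with hcqE
  set L1 := ENNReal.ofReal (lam₀ * (T - r)) with hL1
  set L2 := ENNReal.ofReal ((T - r) ^ ((1:ℝ)/2) * c₀) with hL2
  set KK := L1 + L1 * cqE + L2 * (1 + cqE) with hKK
  -- measurability facts
  have hYm : ∀ u, Measurable fun ω => Y n u ω := fun u => (hYad n u).mono (F.le u) le_rfl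
  have hstopc : ∀ (s t : ℝ) (ω : Ω), Continuous fun u =>
      stopAt (fun v => Y n v ω) s u - stopAt (fun v => Y n v ω) t u := by
    intro s t ω
    exact ((hYc n ω).comp (continuous_id.min continuous_const)).sub
      ((hYc n ω).comp (continuous_id.min continuous_const))
  set Ei : ℕ → Ω → ℝ≥0∞ := fun i ω => esupNorm T (fun u =>
      stopAt (fun v => Y n v ω) (P.t n (i-1)) u
        - stopAt (fun v => Y n v ω) (P.t n (i-1-1)) u) with hEidef
  have hEim : ∀ i, Measurable (Ei i) := fun i =>
    measurable_esupNorm hT0 (fun ω => hstopc _ _ ω) (fun u => (hYm _).sub (hYm _))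
  have hEm : Measurable fun ω => esupNorm T (fun u => Y n u ω) :=
    measurable_esupNorm hT0 (hYc n) hYm
  set Δ : ℕ → ℝ := fun i => P.t n i - P.t n (i-1) with hΔdef
  have hΔ0 : ∀ i, i ≤ k → 0 ≤ Δ i := fun i hi => sub_nonneg.mpr (P.t_le (by omega) hi)
  -- the three dominating functions
  set g₁ : ℝ≥0∞ := ENNReal.ofReal (lam₀ * (T - r) * m2) with hg₁
  set g₂ : Ω → ℝ≥0∞ := fun ω => ENNReal.ofReal lam₀ *
    ∑ i ∈ Finset.range (k+1), ENNReal.ofReal (Δ i) * Ei i ω with hg₂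
  set g₃ : Ω → ℝ≥0∞ := fun ω => ENNReal.ofReal (m2 * (T - r) ^ ((1:ℝ)/2) * c₀) *
    (1 + esupNorm T (fun u => Y n u ω)) with hg₃
  have hsummeas : Measurable fun ω => ∑ i ∈ Finset.range (k+1), ENNReal.ofReal (Δ i) * Ei i ω :=
    Finset.measurable_sum _ fun i _ => (hEim i).const_mul _
  have hg₂m : Measurable g₂ := hsummeas.const_mul _
  have hg₃m : Measurable g₃ := (hEm.const_add 1).const_mul _
  -- pointwise domination
  have hsup : ∀ ω, (⨆ j : Fin (k + 1),
      (‖∫ s in Ioc r (P.t n j),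
          (P.gamma n s - 1) • G (P.t n j) (P.pred n s) (fun v => Y n v ω)‖₊ : ℝ≥0∞) ^ p)
        ≤ (g₁ + g₂ ω + g₃ ω) ^ p := by
    intro ω
    refine iSup_le fun j => ENNReal.rpow_le_rpow ?_ hp0
    rw [← enorm_eq_nnnorm, ← ofReal_norm]
    refine le_trans (ENNReal.ofReal_le_ofReal
      (pathwise_bound hr hrT P G lam₀ c₀ hlam₀ hc₀ hlip hgrow
        (fun v => Y n v ω) (hYc n ω) j (Nat.lt_succ_iff.mp j.isLt))) ?_
    refine le_trans ENNReal.ofReal_add_le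
      (add_le_add (le_trans ENNReal.ofReal_add_le (add_le_add ?_ ?_)) ?_)
    · exact le_of_eq rfl
    · rw [ENNReal.ofReal_mul hlam₀]
      refine mul_le_mul_right ?_ _
      rw [ENNReal.ofReal_sum_of_nonneg (fun i hi => mul_nonneg
        (hΔ0 i (by rw [Finset.mem_range] at hi; omega)) (supNorm_nonneg _ _))]
      refine Finset.sum_le_sum fun i hi => ?_
      rw [ENNReal.ofReal_mul (hΔ0 i (by rw [Finset.mem_range] at hi; omega))]
      exact mul_le_mul_right (ofReal_supNorm_le_esupNorm hT0 (hstopc _ _ ω)) _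
    · rw [ENNReal.ofReal_mul (mul_nonneg (mul_nonneg hm20 (Real.rpow_nonneg hTr.le _)) hc₀)]
      refine mul_le_mul_right ?_ _
      refine le_trans ENNReal.ofReal_add_le ?_
      rw [ENNReal.ofReal_one]
      exact add_le_add_right (ofReal_supNorm_le_esupNorm hT0 (hYc n ω)) 1
  -- Minkowski steps
  have step1 : (∫⁻ ω, (g₁ + g₂ ω + g₃ ω) ^ p ∂μ) ^ ((1:ℝ)/p)
      ≤ (∫⁻ ω, (g₁ + g₂ ω) ^ p ∂μ) ^ ((1:ℝ)/p) + (∫⁻ ω, g₃ ω ^ p ∂μ) ^ ((1:ℝ)/p) := by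
    have h := ENNReal.lintegral_Lp_add_le (μ := μ) (f := fun ω => g₁ + g₂ ω) (g := g₃)
      (measurable_const.add hg₂m).aemeasurable hg₃m.aemeasurable hp
    simpa only [Pi.add_apply] using h
  have step2 : (∫⁻ ω, (g₁ + g₂ ω) ^ p ∂μ) ^ ((1:ℝ)/p)
      ≤ g₁ + (∫⁻ ω, g₂ ω ^ p ∂μ) ^ ((1:ℝ)/p) := by
    have h := ENNReal.lintegral_Lp_add_le (μ := μ) (f := fun _ => g₁) (g := g₂)
      measurable_const.aemeasurable hg₂m.aemeasurable hp
    simp only [Pi.add_apply] at h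
    rw [lintegral_Lp_const (μ := μ) g₁ hp] at h
    exact h
  -- per-i moment bound
  have hEi : ∀ i ∈ Finset.range (k+1),
      (∫⁻ ω, Ei i ω ^ p ∂μ) ^ ((1:ℝ)/p) ≤ cqE * M * ENNReal.ofReal m2 := by
    intro i hi
    rw [Finset.mem_range] at hi
    rcases Nat.lt_or_ge i 2 with h2 | h2
    · have hzero : ∀ ω, Ei i ω = 0 := by
        intro ω
        have hidx : i - 1 - 1 = i - 1 := by omega
        rw [hEidef]
        simp only [hidx, sub_self]
        simp [esupNorm]
      simp only [hzero, ENNReal.zero_rpow_of_pos hppos, lintegral_zero,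
        ENNReal.zero_rpow_of_pos (by positivity : (0:ℝ) < 1/p)]
      exact zero_le
    · have hs : P.t n (i-1) ∈ Icc r T := P.t_mem (by omega)
      have ht : P.t n (i-1-1) ∈ Icc r T := P.t_mem (by omega)
      have hlt : P.t n (i-1-1) < P.t n (i-1) := P.t_lt (by omega) (by omega)
      have hne : P.t n (i-1) ≠ P.t n (i-1-1) := ne_of_gt hlt
      have hmom2 := hmom n (P.t n (i-1)) hs (P.t n (i-1-1)) ht hne
      have hdiv : (∫⁻ ω, Ei i ω ^ p ∂μ)
            / ENNReal.ofReal (|P.t n (i-1) - P.t n (i-1-1)| ^ (p/2))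
          ≤ ENNReal.ofReal cp₀ * (1 + E₀) := le_trans le_add_self hmom2
      have hb0 : ENNReal.ofReal (|P.t n (i-1) - P.t n (i-1-1)| ^ (p/2)) ≠ 0 := by
        rw [ne_eq, ENNReal.ofReal_eq_zero, not_le]
        exact Real.rpow_pos_of_pos (abs_pos.mpr (sub_ne_zero.mpr hne)) _
      have hX := (ENNReal.div_le_iff hb0 ENNReal.ofReal_ne_top).mp hdiv
      have habs : |P.t n (i-1) - P.t n (i-1-1)| ≤ msh := by
        rw [abs_of_nonneg (sub_nonneg.mpr hlt.le)]
        have h := P.incr_le_mesh (n := n) (i := i-1-1) (by omega)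
        have heq : i - 1 - 1 + 1 = i - 1 := by omega
        rw [heq] at h
        exact h
      calc (∫⁻ ω, Ei i ω ^ p ∂μ) ^ ((1:ℝ)/p)
          ≤ ((ENNReal.ofReal cp₀ * (1 + E₀))
              * ENNReal.ofReal (|P.t n (i-1) - P.t n (i-1-1)| ^ (p/2))) ^ ((1:ℝ)/p) :=
            ENNReal.rpow_le_rpow hX (by positivity)
        _ = (ENNReal.ofReal cp₀) ^ ((1:ℝ)/p) * (1 + E₀) ^ ((1:ℝ)/p)
              * (ENNReal.ofReal (|P.t n (i-1) - P.t n (i-1-1)| ^ (p/2))) ^ ((1:ℝ)/p) := by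
            rw [ENNReal.mul_rpow_of_nonneg _ _ (by positivity : (0:ℝ) ≤ 1/p),
              ENNReal.mul_rpow_of_nonneg _ _ (by positivity : (0:ℝ) ≤ 1/p)]
        _ ≤ cqE * M * ENNReal.ofReal m2 := by
            have e1 : (ENNReal.ofReal cp₀) ^ ((1:ℝ)/p) = cqE := by
              rw [hcqE, hcq]
              exact ENNReal.ofReal_rpow_of_nonneg hcp₀ (by positivity)
            have e2 : (ENNReal.ofReal (|P.t n (i-1) - P.t n (i-1-1)| ^ (p/2))) ^ ((1:ℝ)/p)
                ≤ ENNReal.ofReal m2 := by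
              have h1 : |P.t n (i-1) - P.t n (i-1-1)| ^ (p/2)
                  = (|P.t n (i-1) - P.t n (i-1-1)| ^ ((1:ℝ)/2)) ^ p := by
                rw [← Real.rpow_mul (abs_nonneg _)]
                congr 1; ring
              rw [h1, ← ENNReal.ofReal_rpow_of_nonneg (Real.rpow_nonneg (abs_nonneg _) _) hp0,
                ← ENNReal.rpow_mul, show p * ((1:ℝ)/p) = 1 by field_simp, ENNReal.rpow_one]
              exact ENNReal.ofReal_le_ofReal
                (Real.rpow_le_rpow (abs_nonneg _) habs (by norm_num))
            rw [e1, hM]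
            exact mul_le_mul' le_rfl e2
  -- sum of the Δ's
  have hsumΔ : ∑ i ∈ Finset.range (k+1), ENNReal.ofReal (Δ i) = ENNReal.ofReal (T - r) := by
    rw [← ENNReal.ofReal_sum_of_nonneg
      (fun i hi => hΔ0 i (by rw [Finset.mem_range] at hi; omega))]
    congr 1
    have h := P.sum_delta (n := n) (k+1)
    rw [Nat.add_sub_cancel, hkdef, P.left n, P.right n] at h
    exact h
  -- N₂ bound
  have hN₂ : (∫⁻ ω, g₂ ω ^ p ∂μ) ^ ((1:ℝ)/p)
      ≤ L1 * (cqE * M * ENNReal.ofReal m2) := by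
    simp only [hg₂]
    rw [lintegral_Lp_const_mul (μ := μ) (ENNReal.ofReal lam₀) hsummeas hp]
    have hin : (∫⁻ ω, (∑ i ∈ Finset.range (k+1), ENNReal.ofReal (Δ i) * Ei i ω) ^ p ∂μ) ^ ((1:ℝ)/p)
        ≤ ENNReal.ofReal (T - r) * (cqE * M * ENNReal.ofReal m2) := by
      have hmk := lintegral_Lp_sum_le (μ := μ) (Finset.range (k+1))
        (fun i ω => ENNReal.ofReal (Δ i) * Ei i ω)
        (fun i _ => (hEim i).const_mul _) hp
      refine le_trans hmk ?_
      have hterm : ∀ i ∈ Finset.range (k+1),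
          (∫⁻ ω, (ENNReal.ofReal (Δ i) * Ei i ω) ^ p ∂μ) ^ ((1:ℝ)/p)
            ≤ ENNReal.ofReal (Δ i) * (cqE * M * ENNReal.ofReal m2) := by
        intro i hi
        rw [lintegral_Lp_const_mul (μ := μ) (ENNReal.ofReal (Δ i)) (hEim i) hp]
        exact mul_le_mul_right (hEi i hi) _
      refine le_trans (Finset.sum_le_sum hterm) ?_
      rw [← Finset.sum_mul, hsumΔ]
    calc ENNReal.ofReal lam₀ *
          (∫⁻ ω, (∑ i ∈ Finset.range (k+1), ENNReal.ofReal (Δ i) * Ei i ω) ^ p ∂μ) ^ ((1:ℝ)/p)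
        ≤ ENNReal.ofReal lam₀ * (ENNReal.ofReal (T - r) * (cqE * M * ENNReal.ofReal m2)) :=
          mul_le_mul_right hin _
      _ = L1 * (cqE * M * ENNReal.ofReal m2) := by
          rw [hL1, ENNReal.ofReal_mul hlam₀]; ring
  -- N₃ bound
  have hN₃ : (∫⁻ ω, g₃ ω ^ p ∂μ) ^ ((1:ℝ)/p)
      ≤ ENNReal.ofReal (m2 * (T - r) ^ ((1:ℝ)/2) * c₀) * (1 + cqE * M) := by
    simp only [hg₃]
    rw [lintegral_Lp_const_mul (μ := μ)
      (ENNReal.ofReal (m2 * (T - r) ^ ((1:ℝ)/2) * c₀)) (hEm.const_add 1) hp]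
    refine mul_le_mul_right ?_ _
    have hmink := ENNReal.lintegral_Lp_add_le (μ := μ) (f := fun _ : Ω => (1:ℝ≥0∞))
      (g := fun ω => esupNorm T fun u => Y n u ω)
      measurable_const.aemeasurable hEm.aemeasurable hp
    simp only [Pi.add_apply] at hmink
    refine le_trans hmink ?_
    rw [lintegral_Lp_const (μ := μ) (1:ℝ≥0∞) hp]
    refine add_le_add_right ?_ 1
    have h1 : (∫⁻ ω, (esupNorm T fun u => Y n u ω) ^ p ∂μ)
        ≤ ENNReal.ofReal cp₀ * (1 + E₀) :=
      le_trans le_self_add (hmom n r ⟨le_rfl, hrT.le⟩ T ⟨hrT.le, le_rfl⟩ hrT.ne)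
    calc (∫⁻ ω, (esupNorm T fun u => Y n u ω) ^ p ∂μ) ^ ((1:ℝ)/p)
        ≤ (ENNReal.ofReal cp₀ * (1 + E₀)) ^ ((1:ℝ)/p) :=
          ENNReal.rpow_le_rpow h1 (by positivity)
      _ = cqE * M := by
          rw [ENNReal.mul_rpow_of_nonneg _ _ (by positivity : (0:ℝ) ≤ 1/p), hM, hcqE, hcq,
            ENNReal.ofReal_rpow_of_nonneg hcp₀ (by positivity : (0:ℝ) ≤ 1/p)]
  -- combine
  have h1M : 1 + cqE * M ≤ M * (1 + cqE) := by
    rw [mul_add, mul_one]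
    exact add_le_add hM1 (le_of_eq (mul_comm cqE M))
  have hroot : (∫⁻ ω, (g₁ + g₂ ω + g₃ ω) ^ p ∂μ) ^ ((1:ℝ)/p)
      ≤ ENNReal.ofReal m2 * M * KK := by
    refine le_trans step1 (le_trans (add_le_add_left step2 _) ?_)
    have b1 : g₁ ≤ ENNReal.ofReal m2 * M * L1 := by
      calc g₁ = L1 * ENNReal.ofReal m2 := by rw [hg₁, hL1, ENNReal.ofReal_mul hb1]
        _ ≤ L1 * ENNReal.ofReal m2 * M := le_mul_of_one_le_right' hM1
        _ = ENNReal.ofReal m2 * M * L1 := by ring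
    have b2 : (∫⁻ ω, g₂ ω ^ p ∂μ) ^ ((1:ℝ)/p) ≤ ENNReal.ofReal m2 * M * (L1 * cqE) :=
      le_trans hN₂ (le_of_eq (by ring))
    have b3 : (∫⁻ ω, g₃ ω ^ p ∂μ) ^ ((1:ℝ)/p)
        ≤ ENNReal.ofReal m2 * M * (L2 * (1 + cqE)) := by
      refine le_trans hN₃ ?_
      have e : ENNReal.ofReal (m2 * (T - r) ^ ((1:ℝ)/2) * c₀)
          = ENNReal.ofReal m2 * L2 := by
        rw [hL2, ← ENNReal.ofReal_mul hm20, mul_assoc]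
      rw [e]
      calc ENNReal.ofReal m2 * L2 * (1 + cqE * M)
          ≤ ENNReal.ofReal m2 * L2 * (M * (1 + cqE)) := mul_le_mul_right h1M _
        _ = ENNReal.ofReal m2 * M * (L2 * (1 + cqE)) := by ring
    calc g₁ + (∫⁻ ω, g₂ ω ^ p ∂μ) ^ ((1:ℝ)/p) + (∫⁻ ω, g₃ ω ^ p ∂μ) ^ ((1:ℝ)/p)
        ≤ ENNReal.ofReal m2 * M * L1 + ENNReal.ofReal m2 * M * (L1 * cqE)
            + ENNReal.ofReal m2 * M * (L2 * (1 + cqE)) := add_le_add (add_le_add b1 b2) b3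
      _ = ENNReal.ofReal m2 * M * KK := by rw [hKK]; ring
  have hJ : (∫⁻ ω, (g₁ + g₂ ω + g₃ ω) ^ p ∂μ)
      ≤ (ENNReal.ofReal m2 * M * KK) ^ p := by
    have h1 : (∫⁻ ω, (g₁ + g₂ ω + g₃ ω) ^ p ∂μ)
        = ((∫⁻ ω, (g₁ + g₂ ω + g₃ ω) ^ p ∂μ) ^ ((1:ℝ)/p)) ^ p := by
      rw [← ENNReal.rpow_mul, show (1:ℝ)/p * p = 1 by field_simp, ENNReal.rpow_one]
    rw [h1]
    exact ENNReal.rpow_le_rpow hroot hp0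
  have hm2p : (ENNReal.ofReal m2) ^ p = ENNReal.ofReal (msh ^ (p/2)) := by
    rw [ENNReal.ofReal_rpow_of_nonneg hm20 hp0]
    congr 1
    rw [hm2def, ← Real.rpow_mul hmesh0.le]
    congr 1; ring
  have hMp : M ^ p = 1 + E₀ := by
    rw [hM, ← ENNReal.rpow_mul, show (1:ℝ)/p * p = 1 by field_simp, ENNReal.rpow_one]
  have hKKle : KK ≤ ENNReal.ofReal base := by
    rw [hKK, hL1, hL2, hcqE, hbase]
    rw [← ENNReal.ofReal_mul hb1, ← ENNReal.ofReal_one, ← ENNReal.ofReal_add zero_le_one hcq0,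
      ← ENNReal.ofReal_mul (mul_nonneg (Real.rpow_nonneg hTr.le _) hc₀),
      ← ENNReal.ofReal_add hb1 hb2, ← ENNReal.ofReal_add (by linarith) hb3]
    exact ENNReal.ofReal_le_ofReal (by linarith)
  have hKKp : KK ^ p ≤ ENNReal.ofReal (base ^ p) := by
    rw [← ENNReal.ofReal_rpow_of_nonneg hbase0 hp0]
    exact ENNReal.rpow_le_rpow hKKle hp0
  calc ∫⁻ ω, (⨆ j : Fin (k + 1),
        (‖∫ s in Ioc r (P.t n j),
            (P.gamma n s - 1) • G (P.t n j) (P.pred n s) (fun v => Y n v ω)‖₊ : ℝ≥0∞) ^ p) ∂μ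
      ≤ ∫⁻ ω, (g₁ + g₂ ω + g₃ ω) ^ p ∂μ := lintegral_mono hsup
    _ ≤ (ENNReal.ofReal m2 * M * KK) ^ p := hJ
    _ = (ENNReal.ofReal m2) ^ p * M ^ p * KK ^ p := by
        rw [ENNReal.mul_rpow_of_nonneg _ _ hp0, ENNReal.mul_rpow_of_nonneg _ _ hp0]
    _ ≤ ENNReal.ofReal (base ^ p) * ENNReal.ofReal (msh ^ (p/2)) * (1 + E₀) := by
        rw [hm2p, hMp]
        calc ENNReal.ofReal (msh ^ (p/2)) * (1 + E₀) * KK ^ p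
            ≤ ENNReal.ofReal (msh ^ (p/2)) * (1 + E₀) * ENNReal.ofReal (base ^ p) :=
              mul_le_mul_right hKKp _
          _ = ENNReal.ofReal (base ^ p) * ENNReal.ofReal (msh ^ (p/2)) * (1 + E₀) := by ring
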